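/- Let (Θ, 𝔉, μ) be a probability space, let n ≥ 1, let β* ∈ ℝⁿ, and let F : Θ × ℝⁿ → ℝ be such that θ ↦ F(θ, β) is measurable for each β, and there exist L > 0 and r > 0 with |F(θ, β) − F(θ, β')| ≤ L‖β − β'‖₂ for all θ ∈ Θ and all β, β' in the closed ball of radius r around β*. Assume that for μ-almost every θ the function β ↦ F(θ, β) is differentiable at β* with gradient ∇F(θ, β*). Then for all s, t ∈ ℝⁿ, the limit lim_{ε→0⁺} ε⁻² ∫ (F(θ, β* + εs) − F(θ, β*)) (F(θ, β* + εt) − F(θ, β*)) dμ(θ) exists and equals ∫ (sᵀ∇F(θ, β*)) (tᵀ∇F(θ, β*)) dμ(θ) = sᵀ ( ∫ ∇F(θ, β*) ∇F(θ, β*)ᵀ dμ(θ) ) t. -/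

import Mathlib

open MeasureTheory Matrix Filter

/-- The continuous linear functional `x ↦ gᵀ x` on `ℝⁿ`. -/
noncomputable def dotCLM {n : ℕ} (g : Fin n → ℝ) : (Fin n → ℝ) →L[ℝ] ℝ :=
  ∑ i, g i • (ContinuousLinearMap.proj i : (Fin n → ℝ) →L[ℝ] ℝ)

lemma dotCLM_apply' {n : ℕ} (g v : Fin n → ℝ) : dotCLM g v = v ⬝ᵥ g := by
  simp [dotCLM, dotProduct, mul_comm]

lemma normE_smul' {n : ℕ} {ε : ℝ} (hε : 0 ≤ ε) (v : Fin n → ℝ) :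
    Real.sqrt (∑ i, (ε * v i) ^ 2) = ε * Real.sqrt (∑ i, v i ^ 2) := by
  have h : (∑ i, (ε * v i) ^ 2) = ε ^ 2 * ∑ i, v i ^ 2 := by
    rw [Finset.mul_sum]; exact Finset.sum_congr rfl fun i _ => by ring
  rw [h, Real.sqrt_mul (sq_nonneg ε), Real.sqrt_sq hε]

/-- Covariance-kernel limit: under a local Lipschitz condition and
a.e. differentiability of `F(θ, ·)` at `β*` with gradient `∇F(θ, β*)`, one has
`lim_{ε→0⁺} ε⁻² ∫ (F(θ,β*+εs)−F(θ,β*))(F(θ,β*+εt)−F(θ,β*)) dμ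
 = ∫ (sᵀ∇F)(tᵀ∇F) dμ = sᵀ (∫ ∇F ∇Fᵀ dμ) t`. -/
theorem stmt11 {n : ℕ} (hn : 1 ≤ n)
    {Θ : Type*} [MeasurableSpace Θ] (μ : Measure Θ) [IsProbabilityMeasure μ]
    (βstar : Fin n → ℝ)
    (F : Θ → (Fin n → ℝ) → ℝ)
    (hFmeas : ∀ β : Fin n → ℝ, Measurable (fun θ => F θ β))
    (L r : ℝ) (hL : 0 < L) (hr : 0 < r)
    (hLip : ∀ θ : Θ, ∀ β β' : Fin n → ℝ,
      Real.sqrt (∑ i, (β i - βstar i) ^ 2) ≤ r →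
      Real.sqrt (∑ i, (β' i - βstar i) ^ 2) ≤ r →
      |F θ β - F θ β'| ≤ L * Real.sqrt (∑ i, (β i - β' i) ^ 2))
    (gradF : Θ → Fin n → ℝ)
    (hdiff : ∀ᵐ θ ∂μ, HasFDerivAt (F θ) (dotCLM (gradF θ)) βstar) :
    ∀ s t : Fin n → ℝ,
      Tendsto (fun ε : ℝ =>
          (ε ^ 2)⁻¹ * ∫ θ, (F θ (βstar + ε • s) - F θ βstar)
            * (F θ (βstar + ε • t) - F θ βstar) ∂μ)
        (nhdsWithin 0 (Set.Ioi 0))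
        (nhds (∫ θ, (s ⬝ᵥ gradF θ) * (t ⬝ᵥ gradF θ) ∂μ)) ∧
      (∫ θ, (s ⬝ᵥ gradF θ) * (t ⬝ᵥ gradF θ) ∂μ)
        = s ⬝ᵥ (Matrix.of fun i j => ∫ θ, gradF θ i * gradF θ j ∂μ).mulVec t := by
  -- Euclidean norm
  set N : (Fin n → ℝ) → ℝ := fun v => Real.sqrt (∑ i, v i ^ 2) with hNdef
  have hN0 : ∀ v, 0 ≤ N v := fun v => Real.sqrt_nonneg _
  -- deterministic bound on difference quotients
  have hbound : ∀ (v : Fin n → ℝ) (ε : ℝ), 0 < ε → ε * N v ≤ r → ∀ θ,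
      |ε⁻¹ * (F θ (βstar + ε • v) - F θ βstar)| ≤ L * N v := by
    intro v ε hε hεr θ
    have hptw : ∀ i, (βstar + ε • v) i - βstar i = ε * v i := fun i => by
      simp [Pi.add_apply, Pi.smul_apply, smul_eq_mul]
    have hnorm : Real.sqrt (∑ i, ((βstar + ε • v) i - βstar i) ^ 2) = ε * N v := by
      simp only [hptw]; exact normE_smul' hε.le v
    have h2 : Real.sqrt (∑ i, (βstar i - βstar i) ^ 2) ≤ r := by
      simp [hr.le]
    have h3 := hLip θ (βstar + ε • v) βstar (hnorm ▸ hεr) h2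
    rw [hnorm] at h3
    rw [abs_mul, abs_inv, abs_of_pos hε]
    calc ε⁻¹ * |F θ (βstar + ε • v) - F θ βstar| ≤ ε⁻¹ * (L * (ε * N v)) := by
          exact mul_le_mul_of_nonneg_left h3 (by positivity)
      _ = L * N v := by field_simp
  -- a.e. convergence of difference quotients
  have hslope : ∀ v : Fin n → ℝ, ∀ᵐ θ ∂μ,
      Tendsto (fun ε : ℝ => ε⁻¹ * (F θ (βstar + ε • v) - F θ βstar))
        (nhdsWithin 0 (Set.Ioi 0)) (nhds (v ⬝ᵥ gradF θ)) := by
    intro v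
    filter_upwards [hdiff] with θ hθ
    have h0 : βstar + (0:ℝ) • v = βstar := by simp
    have h1 : HasDerivAt (fun ε : ℝ => βstar + ε • v) v 0 := by
      simpa using ((hasDerivAt_id (0:ℝ)).smul_const v).const_add βstar
    have hθ' : HasFDerivAt (F θ) (dotCLM (gradF θ)) (βstar + (0:ℝ) • v) := by rw [h0]; exact hθ
    have h2 : HasDerivAt (fun ε : ℝ => F θ (βstar + ε • v)) (dotCLM (gradF θ) v) 0 :=
      hθ'.comp_hasDerivAt 0 h1
    have h3 := hasDerivAt_iff_tendsto_slope.mp h2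
    have h4 : Tendsto (slope (fun ε : ℝ => F θ (βstar + ε • v)) 0)
        (nhdsWithin 0 (Set.Ioi 0)) (nhds (dotCLM (gradF θ) v)) :=
      h3.mono_left (nhdsWithin_mono 0 (fun x hx => ne_of_gt hx))
    rw [dotCLM_apply'] at h4
    refine h4.congr fun ε => ?_
    simp [slope_def_field, div_eq_inv_mul, h0]
  -- a.e. bound on directional derivatives
  have hdotbd : ∀ v : Fin n → ℝ, ∀ᵐ θ ∂μ, |v ⬝ᵥ gradF θ| ≤ L * N v := by
    intro v
    filter_upwards [hslope v] with θ hθ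
    have hd : 0 < r / (N v + 1) := by positivity
    have hmem : Set.Ioo (0:ℝ) (r / (N v + 1)) ∈ nhdsWithin (0:ℝ) (Set.Ioi 0) :=
      Ioo_mem_nhdsGT_of_mem (by constructor <;> simp [hd])
    have hev : ∀ᶠ ε in nhdsWithin (0:ℝ) (Set.Ioi 0),
        |ε⁻¹ * (F θ (βstar + ε • v) - F θ βstar)| ≤ L * N v := by
      filter_upwards [hmem] with ε hε
      refine hbound v ε hε.1 ?_ θ
      have h1 : ε * N v ≤ ε * (N v + 1) :=
        mul_le_mul_of_nonneg_left (by linarith [hN0 v]) hε.1.le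
      have h2 : ε * (N v + 1) < r := by
        have := (lt_div_iff₀ (by linarith [hN0 v] : (0:ℝ) < N v + 1)).mp hε.2
        linarith
      linarith
    exact le_of_tendsto hθ.abs hev
  -- a.e. measurability of directional derivatives
  have hmeasdot : ∀ v : Fin n → ℝ, AEMeasurable (fun θ => v ⬝ᵥ gradF θ) μ := by
    intro v
    have hseq : Tendsto (fun k : ℕ => ((k:ℝ)+1)⁻¹) atTop (nhdsWithin 0 (Set.Ioi 0)) := by
      apply tendsto_nhdsWithin_of_tendsto_nhds_of_eventually_within
      · exact tendsto_one_div_add_atTop_nhds_zero_nat.congr fun k => one_div _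
      · exact Eventually.of_forall fun k => Set.mem_Ioi.mpr (by positivity)
    have hae : ∀ᵐ θ ∂μ, Tendsto (fun k : ℕ =>
        (((k:ℝ)+1)⁻¹)⁻¹ * (F θ (βstar + ((k:ℝ)+1)⁻¹ • v) - F θ βstar)) atTop
        (nhds (v ⬝ᵥ gradF θ)) := by
      filter_upwards [hslope v] with θ hθ using hθ.comp hseq
    exact aemeasurable_of_tendsto_metrizable_ae atTop
      (fun k => (((hFmeas _).sub (hFmeas _)).const_mul _).aemeasurable) hae
  -- integrability of products of directional derivatives
  have hint : ∀ v w : Fin n → ℝ,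
      Integrable (fun θ => (v ⬝ᵥ gradF θ) * (w ⬝ᵥ gradF θ)) μ := by
    intro v w
    refine Integrable.mono' (integrable_const ((L * N v) * (L * N w)))
      (((hmeasdot v).mul (hmeasdot w)).aestronglyMeasurable) ?_
    filter_upwards [hdotbd v, hdotbd w] with θ h1 h2
    rw [Real.norm_eq_abs, abs_mul]
    exact mul_le_mul h1 h2 (abs_nonneg _) (by positivity)
  intro s t
  constructor
  · -- dominated convergence
    have hDCT : Tendsto (fun ε : ℝ => ∫ θ,
        (ε⁻¹ * (F θ (βstar + ε • s) - F θ βstar)) *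
        (ε⁻¹ * (F θ (βstar + ε • t) - F θ βstar)) ∂μ)
        (nhdsWithin 0 (Set.Ioi 0))
        (nhds (∫ θ, (s ⬝ᵥ gradF θ) * (t ⬝ᵥ gradF θ) ∂μ)) := by
      apply tendsto_integral_filter_of_dominated_convergence
          (fun _ => (L * N s) * (L * N t))
      · exact Eventually.of_forall fun ε =>
          ((((hFmeas _).sub (hFmeas _)).const_mul _).mul
            (((hFmeas _).sub (hFmeas _)).const_mul _)).aestronglyMeasurable
      · have hd : 0 < min (r / (N s + 1)) (r / (N t + 1)) := by positivity
        have hmem : Set.Ioo (0:ℝ) (min (r / (N s + 1)) (r / (N t + 1)))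
            ∈ nhdsWithin (0:ℝ) (Set.Ioi 0) :=
          Ioo_mem_nhdsGT_of_mem (by constructor <;> simp [hd])
        filter_upwards [hmem] with ε hε
        refine Eventually.of_forall fun θ => ?_
        have hbs : ε * N s ≤ r := by
          have h2 : ε * (N s + 1) < r := by
            have := (lt_div_iff₀ (by linarith [hN0 s] : (0:ℝ) < N s + 1)).mp
              (lt_of_lt_of_le hε.2 (min_le_left _ _))
            linarith
          nlinarith [hN0 s, hε.1.le]
        have hbt : ε * N t ≤ r := by
          have h2 : ε * (N t + 1) < r := by
            have := (lt_div_iff₀ (by linarith [hN0 t] : (0:ℝ) < N t + 1)).mp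
              (lt_of_lt_of_le hε.2 (min_le_right _ _))
            linarith
          nlinarith [hN0 t, hε.1.le]
        rw [Real.norm_eq_abs, abs_mul]
        exact mul_le_mul (hbound s ε hε.1 hbs θ) (hbound t ε hε.1 hbt θ)
          (abs_nonneg _) (by positivity)
      · exact integrable_const _
      · filter_upwards [hslope s, hslope t] with θ h1 h2 using h1.mul h2
    refine Tendsto.congr (fun ε => ?_) hDCT
    rw [← integral_const_mul]
    exact integral_congr_ae (Eventually.of_forall fun θ => by ring)
  · -- expansion of the bilinear form
    have hintij : ∀ i j : Fin n,
        Integrable (fun θ => gradF θ i * gradF θ j) μ := by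
      intro i j
      have := hint (Pi.single i 1) (Pi.single j 1)
      simpa [dotProduct, Pi.single_apply] using this
    have hexp : ∀ θ, (s ⬝ᵥ gradF θ) * (t ⬝ᵥ gradF θ)
        = ∑ i, ∑ j, s i * t j * (gradF θ i * gradF θ j) := by
      intro θ
      rw [dotProduct, dotProduct, Finset.sum_mul_sum]
      exact Finset.sum_congr rfl fun i _ => Finset.sum_congr rfl fun j _ => by ring
    have hkey : ∫ θ, (s ⬝ᵥ gradF θ) * (t ⬝ᵥ gradF θ) ∂μ
        = ∑ i, ∑ j, s i * t j * ∫ θ, gradF θ i * gradF θ j ∂μ := by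
      simp_rw [hexp]
      rw [integral_finset_sum _ (fun i _ => integrable_finset_sum _
        (fun j _ => (hintij i j).const_mul _))]
      refine Finset.sum_congr rfl fun i _ => ?_
      rw [integral_finset_sum _ (fun j _ => (hintij i j).const_mul _)]
      exact Finset.sum_congr rfl fun j _ => integral_const_mul _ _
    rw [hkey]
    simp only [dotProduct, Matrix.mulVec, Matrix.of_apply, dotProduct]
    refine Finset.sum_congr rfl fun i _ => ?_
    rw [Finset.mul_sum]
    exact Finset.sum_congr rfl fun j _ => by ring
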